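/- Let f : ℕ → ℕ be the Fibonacci word, i.e., the fixed point starting with 0 of the morphism 0→01, 1→0, and let φ = (1+√5)/2 be the golden ratio. For all integers k ≥ 1 and n ≥ 1, the word f contains an abelian k-power of order n (i.e., there exists i ≥ 0 such that the k consecutive length-n blocks f(i+tn)⋯f(i+(t+1)n−1), t = 0, …, k−1, all have the same Parikh vector) if and only if ⌊kφn⌋ ≡ 0 (mod k) or ⌊kφn⌋ ≡ −1 (mod k). -/

import Mathlib

/-- Sum of the letters of the length-`n` factor of `x` starting at position `i`. -/
def blockSum (x : ℕ → ℕ) (i n : ℕ) : ℕ := ∑ j ∈ Finset.range n, x (i + j)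

/-- Additive complexity: the number of distinct letter-sums of length-`n` factors. -/
noncomputable def addComplexity (x : ℕ → ℕ) (n : ℕ) : ℕ :=
  Set.ncard {s : ℕ | ∃ i : ℕ, blockSum x i n = s}

/-- Parikh vector of the length-`n` factor of `x` starting at position `i`. -/
def parikh (x : ℕ → ℕ) (i n : ℕ) : ℕ → ℕ :=
  fun a => ((Finset.range n).filter fun j => x (i + j) = a).card

/-- Abelian complexity: the number of distinct Parikh vectors of length-`n` factors. -/
noncomputable def abComplexity (x : ℕ → ℕ) (n : ℕ) : ℕ :=
  Set.ncard {P : ℕ → ℕ | ∃ i : ℕ, parikh x i n = P}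

/-- `x` is the fixed point of the morphism `f` starting with the letter `a₀`:
`x 0 = a₀` and `x` is the infinite concatenation `f (x 0) f (x 1) f (x 2) ⋯`. -/
def IsFixedPointOf (f : ℕ → List ℕ) (a₀ : ℕ) (x : ℕ → ℕ) : Prop :=
  x 0 = a₀ ∧ ∀ n j, j < (f (x n)).length →
    x ((∑ k ∈ Finset.range n, (f (x k)).length) + j) = (f (x n)).getD j 0

/-- The Fibonacci morphism 0→01, 1→0. -/
def fibMorphism : ℕ → List ℕ :=
  fun a => if a = 0 then [0, 1] else [0]

/-- The golden ratio (1 + √5)/2. -/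
noncomputable def goldenRat : ℝ := (1 + Real.sqrt 5) / 2

namespace FibH


noncomputable def β : ℝ := 2 - goldenRat

lemma sqrt5_gt : (2:ℝ) < Real.sqrt 5 := by
  have h : (2:ℝ) = Real.sqrt 4 := by
    rw [show (4:ℝ) = 2^2 by norm_num, Real.sqrt_sq (by norm_num : (0:ℝ) ≤ 2)]
  rw [h]; exact Real.sqrt_lt_sqrt (by norm_num) (by norm_num)

lemma sqrt5_lt : Real.sqrt 5 < 3 := by
  have h : (3:ℝ) = Real.sqrt 9 := by
    rw [show (9:ℝ) = 3^2 by norm_num, Real.sqrt_sq (by norm_num : (0:ℝ) ≤ 3)]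
  rw [h]; exact Real.sqrt_lt_sqrt (by norm_num) (by norm_num)

lemma beta_pos : 0 < β := by
  have := sqrt5_lt; unfold β goldenRat; linarith

lemma beta_lt_half : β < 1/2 := by
  have := sqrt5_gt; unfold β goldenRat; linarith

lemma beta_lt_one : β < 1 := lt_trans beta_lt_half (by norm_num)

lemma beta_sq : β^2 = 3*β - 1 := by
  have h5 : Real.sqrt 5 ^ 2 = 5 := Real.sq_sqrt (by norm_num)
  unfold β goldenRat; ring_nf; nlinarith [h5]

lemma irr_golden : Irrational goldenRat := by
  have h5 : Irrational (Real.sqrt 5) := (by norm_num : Nat.Prime 5).irrational_sqrt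
  have : Irrational ((1:ℚ) + Real.sqrt 5) := h5.ratCast_add 1
  have := this.div_ratCast (q := 2) (by norm_num)
  simpa [goldenRat] using this

lemma irr_beta : Irrational β := by
  simpa [β] using irr_golden.ratCast_sub 2

lemma irr_nat_mul {m : ℕ} (hm : m ≠ 0) : Irrational ((m:ℝ) * β) :=
  irr_beta.natCast_mul hm

lemma fract_pos {m : ℕ} (hm : m ≠ 0) : 0 < Int.fract ((m:ℝ) * β) := by
  rcases lt_or_eq_of_le (Int.fract_nonneg ((m:ℝ) * β)) with h | h
  · exact h
  · exfalso
    have : ((m:ℝ) * β) = (⌊(m:ℝ)*β⌋ : ℝ) := by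
      have := Int.fract_add_floor ((m:ℝ)*β)
      rw [← h] at this; linarith [this]
    exact (irr_nat_mul hm).ne_int _ this



lemma floor_split (z : ℤ) (r : ℝ) (h0 : 0 ≤ r) (h1 : r < 1) : ⌊(z:ℝ) + r⌋ = z := by
  rw [Int.floor_eq_iff]
  constructor
  · linarith
  · push_cast; linarith

noncomputable def c (m : ℕ) : ℤ := ⌊((m:ℝ)+1) * β⌋
noncomputable def w (m : ℕ) : ℕ := (c (m+1) - c m).toNat

lemma c_fract (m : ℕ) : ((c m : ℝ)) + Int.fract (((m:ℝ)+1)*β) = ((m:ℝ)+1)*β :=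
  Int.floor_add_fract _

lemma u_pos (m : ℕ) : 0 < Int.fract (((m:ℝ)+1)*β) := by
  have := fract_pos (m := m+1) (Nat.succ_ne_zero m)
  push_cast at this; exact this

lemma u_lt_one (m : ℕ) : Int.fract (((m:ℝ)+1)*β) < 1 := Int.fract_lt_one _

lemma c_zero : c 0 = 0 := by
  have h := beta_pos; have h2 := beta_lt_one
  unfold c
  have : ((0:ℕ):ℝ)+1 = 1 := by norm_num
  rw [this, one_mul]
  rw [Int.floor_eq_iff] <;> constructor <;> push_cast <;> linarith

lemma c_step (m : ℕ) : c m ≤ c (m+1) ∧ c (m+1) ≤ c m + 1 := by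
  constructor
  · apply Int.floor_le_floor; push_cast; nlinarith [beta_pos]
  · unfold c
    have : ((((m+1:ℕ)):ℝ)+1)*β = (((m:ℝ))+1)*β + β := by push_cast; ring
    rw [this]
    calc ⌊((m:ℝ)+1)*β + β⌋ ≤ ⌊((m:ℝ)+1)*β + 1⌋ := by
          apply Int.floor_le_floor; linarith [beta_lt_one]
      _ = c m + 1 := by rw [Int.floor_add_one]; rfl

lemma w_cast (m : ℕ) : (w m : ℤ) = c (m+1) - c m := by
  unfold w; rw [Int.toNat_of_nonneg]; linarith [(c_step m).1]

lemma w_le_one (m : ℕ) : w m ≤ 1 := by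
  have h := (c_step m).2
  have := w_cast m
  omega

-- criterion
lemma w_eq_zero_iff (m : ℕ) :
    w m = 0 ↔ Int.fract (((m:ℝ)+1)*β) < 1 - β := by
  have hc := c_fract m
  have hu0 := u_pos m; have hu1 := u_lt_one m
  set u := Int.fract (((m:ℝ)+1)*β) with hu
  have hexp : (((m+1:ℕ):ℝ)+1)*β = ((c m : ℝ) + u) + β := by
    push_cast; linarith
  constructor
  · intro h0
    -- c(m+1) = c m, so fract((m+2)β) = u + β ≥ 0 and < 1 forces u + β < 1
    have hcc : c (m+1) = c m := by have := w_cast m; omega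
    by_contra hge
    push_neg at hge
    have h2 : c (m+1) = c m + 1 := by
      have : (((m+1:ℕ):ℝ)+1)*β = ((c m + 1 : ℤ):ℝ) + (u + β - 1) := by
        push_cast; linarith
      calc c (m+1) = ⌊(((m+1:ℕ):ℝ)+1)*β⌋ := rfl
        _ = c m + 1 := by
            rw [this]; exact floor_split _ _ (by linarith) (by linarith [beta_lt_one])
    omega
  · intro hlt
    have h2 : c (m+1) = c m := by
      have : (((m+1:ℕ):ℝ)+1)*β = ((c m : ℤ):ℝ) + (u + β) := by
        push_cast; linarith
      calc c (m+1) = ⌊(((m+1:ℕ):ℝ)+1)*β⌋ := rfl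
        _ = c m := by
            rw [this]; exact floor_split _ _ (by linarith [beta_pos]) (by linarith)
    have := w_cast m; omega


noncomputable def Lnat (n : ℕ) : ℕ := ∑ k ∈ Finset.range n, (fibMorphism (w k)).length

lemma fib_len (m : ℕ) : ((fibMorphism (w m)).length : ℤ) = 2 - w m := by
  have := w_le_one m
  interval_cases h : w m <;> simp [fibMorphism, h]

lemma Lnat_cast (n : ℕ) : (Lnat n : ℤ) = 2*n - c n := by
  induction n with
  | zero => simp [Lnat, c_zero]
  | succ n ih =>
      have h1 : Lnat (n+1) = Lnat n + (fibMorphism (w n)).length := by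
        unfold Lnat; rw [Finset.sum_range_succ]
      have h2 := fib_len n
      have h3 := w_cast n
      push_cast [h1]
      push_cast at ih
      omega

lemma key0 (n : ℕ) : c (Lnat n) = n - c n := by
  have hc := c_fract n
  have hu0 := u_pos n; have hu1 := u_lt_one n
  set u := Int.fract (((n:ℝ)+1)*β) with hu
  have hu' : u = ((n:ℝ)+1)*β - (c n : ℝ) := by linarith
  have hβ0 := beta_pos; have hβ1 := beta_lt_one
  have hval : (((Lnat n : ℕ):ℝ)+1)*β = (((n:ℤ) - c n : ℤ):ℝ) + (1-u)*(1-β) := by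
    have hL : ((Lnat n : ℕ):ℝ) = 2*(n:ℝ) - (c n : ℝ) := by
      exact_mod_cast congrArg (Int.cast : ℤ → ℝ) (Lnat_cast n)
    push_cast [hL, hu']
    linear_combination (-((n:ℝ)+1)) * beta_sq
  show ⌊(((Lnat n : ℕ):ℝ)+1)*β⌋ = (n:ℤ) - c n
  rw [hval]
  exact floor_split _ _ (by nlinarith) (by nlinarith)

lemma key1 (n : ℕ) : c (Lnat n + 1) = n - c n := by
  have hc := c_fract n
  have hu0 := u_pos n; have hu1 := u_lt_one n
  set u := Int.fract (((n:ℝ)+1)*β) with hu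
  have hu' : u = ((n:ℝ)+1)*β - (c n : ℝ) := by linarith
  have hβ0 := beta_pos; have hβ1 := beta_lt_one
  have hval : (((Lnat n + 1 : ℕ):ℝ)+1)*β = (((n:ℤ) - c n : ℤ):ℝ) + (1-u*(1-β)) := by
    have hL : ((Lnat n : ℕ):ℝ) = 2*(n:ℝ) - (c n : ℝ) := by
      exact_mod_cast congrArg (Int.cast : ℤ → ℝ) (Lnat_cast n)
    push_cast [hL, hu']
    linear_combination (-((n:ℝ)+1)) * beta_sq
  show ⌊(((Lnat n + 1 : ℕ):ℝ)+1)*β⌋ = (n:ℤ) - c n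
  rw [hval]
  exact floor_split _ _ (by nlinarith) (by nlinarith)

lemma key2 (n : ℕ) (h : w n = 0) : c (Lnat n + 2) = n - c n + 1 := by
  have hc := c_fract n
  have hu0 := u_pos n; have hu1 := u_lt_one n
  have hlt : Int.fract (((n:ℝ)+1)*β) < 1 - β := (w_eq_zero_iff n).mp h
  set u := Int.fract (((n:ℝ)+1)*β) with hu
  have hu' : u = ((n:ℝ)+1)*β - (c n : ℝ) := by linarith
  have hβ0 := beta_pos; have hβ1 := beta_lt_one
  have hval : (((Lnat n + 2 : ℕ):ℝ)+1)*β = (((n:ℤ) - c n + 1 : ℤ):ℝ) + (β - u*(1-β)) := by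
    have hL : ((Lnat n : ℕ):ℝ) = 2*(n:ℝ) - (c n : ℝ) := by
      exact_mod_cast congrArg (Int.cast : ℤ → ℝ) (Lnat_cast n)
    push_cast [hL, hu']
    linear_combination (-((n:ℝ)+1)) * beta_sq
  show ⌊(((Lnat n + 2 : ℕ):ℝ)+1)*β⌋ = (n:ℤ) - c n + 1
  rw [hval]
  refine floor_split _ _ ?_ ?_
  · nlinarith [beta_sq]
  · nlinarith

lemma w_Lnat (n : ℕ) : w (Lnat n) = 0 := by
  have h0 := key0 n; have h1 := key1 n
  have := w_cast (Lnat n); omega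

lemma w_Lnat_succ (n : ℕ) (h : w n = 0) : w (Lnat n + 1) = 1 := by
  have h1 := key1 n
  have h2 : c (Lnat n + 1 + 1) = n - c n + 1 := key2 n h
  have := w_cast (Lnat n + 1); omega


lemma w_zero : w 0 = 0 := by
  rw [w_eq_zero_iff]
  have h0 := beta_pos; have hh := beta_lt_half
  have : ((0:ℕ):ℝ)+1 = 1 := by norm_num
  rw [this, one_mul, Int.fract_eq_self.mpr ⟨le_of_lt h0, beta_lt_one⟩]
  linarith

lemma w_fixed : IsFixedPointOf fibMorphism 0 w := by
  constructor
  · exact w_zero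
  · intro n j hj
    have hsum : (∑ k ∈ Finset.range n, (fibMorphism (w k)).length) = Lnat n := rfl
    rw [hsum]
    rcases Nat.le_one_iff_eq_zero_or_eq_one.mp (w_le_one n) with h | h
    · rw [h] at hj ⊢
      simp only [fibMorphism, if_pos rfl] at hj ⊢
      have hj2 : j < 2 := by simpa using hj
      interval_cases j
      · simpa using w_Lnat n
      · simpa using w_Lnat_succ n h
    · rw [h] at hj ⊢
      simp only [fibMorphism] at hj ⊢
      norm_num at hj ⊢
      rw [hj]
      simpa using w_Lnat n

lemma Lnat_succ (n : ℕ) : Lnat (n+1) = Lnat n + (fibMorphism (w n)).length := by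
  unfold Lnat; rw [Finset.sum_range_succ]

lemma fib_len_pos (a : ℕ) : 1 ≤ (fibMorphism a).length := by
  unfold fibMorphism; split <;> simp

lemma Lnat_lb (n : ℕ) (hn : 1 ≤ n) : n + 1 ≤ Lnat n := by
  induction n with
  | zero => omega
  | succ n ih =>
      rcases Nat.eq_zero_or_pos n with h | h
      · subst h
        have : Lnat 1 = (fibMorphism (w 0)).length := by
          rw [Lnat_succ]; unfold Lnat; simp
        rw [this, w_zero]; simp [fibMorphism]
      · have := ih h
        have := fib_len_pos (w n)
        rw [Lnat_succ]; omega

lemma x_eq_w (x : ℕ → ℕ) (hx : IsFixedPointOf fibMorphism 0 x) : x = w := by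
  funext m
  induction m using Nat.strong_induction_on with
  | _ m IH =>
    rcases Nat.eq_zero_or_pos m with h0 | h0
    · subst h0; rw [hx.1, w_zero]
    · set n := Nat.findGreatest (fun n => Lnat n ≤ m) m with hn
      have hP0 : Lnat 0 ≤ m := by unfold Lnat; simp
      have hspec : Lnat n ≤ m := Nat.findGreatest_spec (P := fun t => Lnat t ≤ m) (n := m) (m := 0) (Nat.zero_le m) hP0
      have hnm : n < m := by
        rcases Nat.eq_zero_or_pos n with h | h
        · omega
        · have := Lnat_lb n h; omega
      have hmax : ¬ (Lnat (n+1) ≤ m) :=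
        Nat.findGreatest_is_greatest (P := fun t => Lnat t ≤ m) (n := m)
          (by omega) (by omega)
      set j := m - Lnat n with hj
      have hjlt : j < (fibMorphism (w n)).length := by
        have := Lnat_succ n; omega
      have hxw : ∀ k, k ≤ n → x k = w k := fun k hk => IH k (by omega)
      have hLx : (∑ k ∈ Finset.range n, (fibMorphism (x k)).length) = Lnat n := by
        unfold Lnat
        exact Finset.sum_congr rfl fun k hk => by
          rw [hxw k (le_of_lt (Finset.mem_range.mp hk))]
      have hxn := hxw n le_rfl
      have h1 := hx.2 n j (by rw [hxn]; exact hjlt)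
      rw [hLx, hxn] at h1
      have h2 := w_fixed.2 n j hjlt
      have hm : Lnat n + j = m := by omega
      have hsum : (∑ k ∈ Finset.range n, (fibMorphism (w k)).length) = Lnat n := rfl
      rw [hsum, hm] at h2
      rw [hm] at h1
      rw [h1, h2]


lemma blockSum_cast (i n : ℕ) : (blockSum w i n : ℤ) = c (i+n) - c i := by
  induction n with
  | zero => simp [blockSum]
  | succ n ih =>
      have h1 : blockSum w i (n+1) = blockSum w i n + w (i+n) := by
        unfold blockSum; rw [Finset.sum_range_succ]
      have h2 := w_cast (i+n)
      have h3 : i + (n+1) = (i+n) + 1 := by omega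
      rw [h3]; push_cast [h1]; omega

lemma parikh_one (i n : ℕ) : parikh w i n 1 = blockSum w i n := by
  unfold parikh blockSum
  rw [Finset.card_filter]
  apply Finset.sum_congr rfl
  intro j _
  have := w_le_one (i+j)
  interval_cases h : w (i+j) <;> simp

lemma parikh_add (i n : ℕ) : parikh w i n 0 + parikh w i n 1 = n := by
  unfold parikh
  have hcg : (Finset.range n).filter (fun j => w (i+j) = 1)
      = (Finset.range n).filter (fun j => ¬ (w (i+j) = 0)) := by
    apply Finset.filter_congr
    intro j _
    have := w_le_one (i+j)
    constructor <;> intro <;> omega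
  rw [hcg, Finset.card_filter_add_card_filter_not, Finset.card_range]

lemma parikh_big (i n a : ℕ) (ha : 2 ≤ a) : parikh w i n a = 0 := by
  unfold parikh
  rw [Finset.card_eq_zero, Finset.filter_eq_empty_iff]
  intro j _
  have := w_le_one (i+j)
  omega

lemma parikh_eq_iff (i i' n : ℕ) :
    parikh w i n = parikh w i' n ↔ blockSum w i n = blockSum w i' n := by
  constructor
  · intro h
    rw [← parikh_one i n, ← parikh_one i' n, h]
  · intro h
    funext a
    match a with
    | 0 =>
        have h1 := parikh_add i n; have h2 := parikh_add i' n
        have h3 := parikh_one i n; have h4 := parikh_one i' n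
        omega
    | 1 => rw [parikh_one, parikh_one, h]
    | (a+2) => rw [parikh_big _ _ _ (by omega), parikh_big _ _ _ (by omega)]

lemma floor_int_add' (z : ℤ) (r : ℝ) : ⌊(z:ℝ) + r⌋ = z + ⌊r⌋ := by
  rw [add_comm, Int.add_comm, Int.floor_add_intCast]

lemma c_split (i d : ℕ) :
    c (i + d) = c i + ⌊(d:ℝ)*β + Int.fract (((i:ℝ)+1)*β)⌋ := by
  have hc := c_fract i
  show ⌊(((i+d:ℕ):ℝ)+1)*β⌋ = _
  have heq : (((i+d:ℕ):ℝ)+1)*β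
      = ((c i : ℤ):ℝ) + ((d:ℝ)*β + Int.fract (((i:ℝ)+1)*β)) := by
    push_cast
    linear_combination -hc
  rw [heq, floor_int_add']


lemma fract_lt_one' (r : ℝ) : Int.fract r < 1 := Int.fract_lt_one r

lemma seed (ε : ℝ) (hε : 0 < ε) :
    ∃ a : ℕ, a ≠ 0 ∧ (Int.fract ((a:ℝ)*β) < ε ∨ 1 - ε < Int.fract ((a:ℝ)*β)) := by
  obtain ⟨N, hN⟩ := exists_nat_gt (1/ε)
  have hN1 : 1 ≤ N := by
    by_contra h
    push_neg at h
    interval_cases N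
    simp at hN
    have := one_div_pos.mpr hε
    linarith
  have hNR : (0:ℝ) < N := by exact_mod_cast hN1
  have hNε : 1/(N:ℝ) < ε := by
    rw [div_lt_iff₀ hNR]
    rw [div_lt_iff₀ hε] at hN
    nlinarith
  -- pigeonhole
  have hmaps : ∀ m ∈ Finset.range (N+1),
      (⌊(N:ℝ) * Int.fract (((m:ℝ)+1)*β)⌋).toNat ∈ Finset.range N := by
    intro m _
    rw [Finset.mem_range]
    have h1 : (N:ℝ) * Int.fract (((m:ℝ)+1)*β) < N := by
      nlinarith [fract_lt_one' (((m:ℝ)+1)*β), Int.fract_nonneg (((m:ℝ)+1)*β)]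
    have h2 : ⌊(N:ℝ) * Int.fract (((m:ℝ)+1)*β)⌋ < N := by
      rw [Int.floor_lt]; exact_mod_cast h1
    omega
  obtain ⟨m1, hm1, m2, hm2, hne, heq⟩ :=
    Finset.exists_ne_map_eq_of_card_lt_of_maps_to
      (by simp : (Finset.range N).card < (Finset.range (N+1)).card) hmaps
  -- wlog m1 < m2
  wlog hlt : m1 < m2 generalizing m1 m2
  · exact this m2 hm2 m1 hm1 hne.symm heq.symm (by omega)
  set f1 := Int.fract (((m1:ℝ)+1)*β) with hf1
  set f2 := Int.fract (((m2:ℝ)+1)*β) with hf2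
  have g1 : (0:ℤ) ≤ ⌊(N:ℝ)*f1⌋ :=
    Int.floor_nonneg.mpr (mul_nonneg (le_of_lt hNR) (Int.fract_nonneg _))
  have g2 : (0:ℤ) ≤ ⌊(N:ℝ)*f2⌋ :=
    Int.floor_nonneg.mpr (mul_nonneg (le_of_lt hNR) (Int.fract_nonneg _))
  have hfl : ⌊(N:ℝ)*f1⌋ = ⌊(N:ℝ)*f2⌋ := by omega
  have b1 := Int.floor_le ((N:ℝ)*f1)
  have b2 := Int.lt_floor_add_one ((N:ℝ)*f1)
  have b3 := Int.floor_le ((N:ℝ)*f2)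
  have b4 := Int.lt_floor_add_one ((N:ℝ)*f2)
  rw [hfl] at b1 b2
  have hdabs : f2 - f1 < 1/(N:ℝ) ∧ f1 - f2 < 1/(N:ℝ) := by
    constructor <;> (rw [lt_div_iff₀ hNR]; nlinarith)
  refine ⟨m2 - m1, by omega, ?_⟩
  have key : ((m2 - m1 : ℕ):ℝ)*β
      = ((⌊((m2:ℝ)+1)*β⌋ - ⌊((m1:ℝ)+1)*β⌋ : ℤ):ℝ) + (f2 - f1) := by
    have k1 := Int.floor_add_fract (((m1:ℝ)+1)*β)
    have k2 := Int.floor_add_fract (((m2:ℝ)+1)*β)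
    push_cast [Nat.cast_sub hlt.le]
    rw [hf1, hf2]
    linear_combination k1 - k2
  rw [key, Int.fract_intCast_add]
  have hN1' : 1/(N:ℝ) ≤ 1 := by
    rw [div_le_one hNR]; exact_mod_cast hN1
  rcases le_or_gt 0 (f2 - f1) with hd | hd
  · left
    rw [Int.fract_eq_self.mpr ⟨hd, by linarith [hdabs.1]⟩]
    linarith [hdabs.1]
  · right
    have : f2 - f1 = ((-1 : ℤ):ℝ) + (f2 - f1 + 1) := by push_cast; ring
    rw [this, Int.fract_intCast_add,
      Int.fract_eq_self.mpr ⟨by linarith [hdabs.2], by linarith⟩]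
    linarith [hdabs.2]

lemma fract_irrational {a : ℕ} (ha : a ≠ 0) : Irrational (Int.fract ((a:ℝ)*β)) := by
  have h := irr_nat_mul ha
  have : Int.fract ((a:ℝ)*β) = (a:ℝ)*β - ⌊(a:ℝ)*β⌋ := rfl
  rw [this]
  exact h.sub_intCast _

lemma scale_up {a : ℕ} (ha : a ≠ 0) {ε : ℝ}
    (h : Int.fract ((a:ℝ)*β) < ε) :
    ∃ m : ℕ, m ≠ 0 ∧ 1 - ε < Int.fract ((m:ℝ)*β) := by
  set δ := Int.fract ((a:ℝ)*β) with hδ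
  have hδ0 : 0 < δ := fract_pos ha
  have hδ1 : δ < 1 := Int.fract_lt_one _
  set j := ⌊1/δ⌋₊ with hj
  have hj1 : 1 ≤ j := Nat.le_floor (by rw [le_div_iff₀ hδ0]; push_cast; nlinarith)
  have hjle : (j:ℝ) * δ ≤ 1 := by
    have := Nat.floor_le (le_of_lt (one_div_pos.mpr hδ0))
    rw [← hj] at this
    calc (j:ℝ) * δ ≤ (1/δ) * δ := by nlinarith
      _ = 1 := by field_simp
  have hjne : (j:ℝ) * δ ≠ 1 := by
    intro hcon
    rw [hδ] at hcon
    exact ((fract_irrational ha).natCast_mul (by omega : j ≠ 0)).ne_int 1 (by exact_mod_cast hcon)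
  have hjlt : (j:ℝ) * δ < 1 := lt_of_le_of_ne hjle hjne
  have hjgt : 1 < ((j:ℝ)+1) * δ := by
    have := Nat.lt_floor_add_one (1/δ)
    rw [← hj] at this
    calc (1:ℝ) = (1/δ) * δ := by field_simp
      _ < ((j:ℝ)+1)*δ := by nlinarith
  refine ⟨j * a, by positivity, ?_⟩
  have hval : ((j*a : ℕ):ℝ)*β = ((j * ⌊(a:ℝ)*β⌋ : ℤ):ℝ) + (j:ℝ)*δ := by
    have k := Int.floor_add_fract ((a:ℝ)*β)
    rw [hδ]
    push_cast
    linear_combination (-(j:ℝ)) * k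
  rw [hval, Int.fract_intCast_add, Int.fract_eq_self.mpr ⟨by positivity, hjlt⟩]
  nlinarith

lemma scale_down {a : ℕ} (ha : a ≠ 0) {ε : ℝ}
    (h : 1 - ε < Int.fract ((a:ℝ)*β)) :
    ∃ m : ℕ, m ≠ 0 ∧ Int.fract ((m:ℝ)*β) < ε := by
  set δ := 1 - Int.fract ((a:ℝ)*β) with hδ
  have hδ0 : 0 < δ := by have := Int.fract_lt_one ((a:ℝ)*β); simp [hδ]; linarith
  have hδ1 : δ < 1 := by have := fract_pos ha; simp [hδ]; linarith
  have hδε : δ < ε := by simp [hδ]; linarith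
  set j := ⌊1/δ⌋₊ with hj
  have hj1 : 1 ≤ j := Nat.le_floor (by rw [le_div_iff₀ hδ0]; push_cast; nlinarith)
  have hjle : (j:ℝ) * δ ≤ 1 := by
    have := Nat.floor_le (le_of_lt (one_div_pos.mpr hδ0))
    rw [← hj] at this
    calc (j:ℝ) * δ ≤ (1/δ) * δ := by nlinarith
      _ = 1 := by field_simp
  have hjne : (j:ℝ) * δ ≠ 1 := by
    intro hcon
    have hirr : Irrational δ := by
      rw [hδ]
      simpa using (fract_irrational ha).natCast_sub 1
    exact (hirr.natCast_mul (by omega : j ≠ 0)).ne_int 1 (by exact_mod_cast hcon)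
  have hjlt : (j:ℝ) * δ < 1 := lt_of_le_of_ne hjle hjne
  have hjgt : 1 < ((j:ℝ)+1) * δ := by
    have := Nat.lt_floor_add_one (1/δ)
    rw [← hj] at this
    calc (1:ℝ) = (1/δ) * δ := by field_simp
      _ < ((j:ℝ)+1)*δ := by nlinarith
  refine ⟨j * a, by positivity, ?_⟩
  have hval : ((j*a : ℕ):ℝ)*β
      = ((j * ⌊(a:ℝ)*β⌋ + j - 1 : ℤ):ℝ) + (1 - (j:ℝ)*δ) := by
    have k := Int.floor_add_fract ((a:ℝ)*β)
    rw [hδ]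
    push_cast
    linear_combination (-(j:ℝ)) * k
  rw [hval, Int.fract_intCast_add,
    Int.fract_eq_self.mpr ⟨by linarith, by nlinarith⟩]
  linarith

lemma exists_fract_lt {ε : ℝ} (hε : 0 < ε) :
    ∃ m : ℕ, m ≠ 0 ∧ Int.fract ((m:ℝ)*β) < ε := by
  obtain ⟨a, ha, h | h⟩ := seed ε hε
  · exact ⟨a, ha, h⟩
  · exact scale_down ha h

lemma exists_fract_gt {ε : ℝ} (hε : 0 < ε) :
    ∃ m : ℕ, m ≠ 0 ∧ 1 - ε < Int.fract ((m:ℝ)*β) := by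
  obtain ⟨a, ha, h | h⟩ := seed ε hε
  · exact scale_up ha h
  · exact ⟨a, ha, h⟩


lemma fract_pos_irr {r : ℝ} (h : Irrational r) : 0 < Int.fract r := by
  rcases lt_or_eq_of_le (Int.fract_nonneg r) with hh | hh
  · exact hh
  · exfalso
    have : r = (⌊r⌋ : ℝ) := by
      have := Int.floor_add_fract r
      rw [← hh] at this; linarith
    exact h.ne_int _ this

theorem main (x : ℕ → ℕ)
    (hx : IsFixedPointOf fibMorphism 0 x) (k n : ℕ) (hk : 1 ≤ k) (hn : 1 ≤ n) :
    (∃ i : ℕ, ∀ t : ℕ, t < k → parikh x (i + t * n) n = parikh x i n) ↔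
    ((k : ℤ) ∣ ⌊(k : ℝ) * goldenRat * (n : ℝ)⌋ ∨
     (k : ℤ) ∣ (⌊(k : ℝ) * goldenRat * (n : ℝ)⌋ + 1)) := by
  have hxw := x_eq_w x hx
  subst hxw
  set F : ℤ := ⌊(k : ℝ) * goldenRat * (n : ℝ)⌋ with hF
  set B : ℤ := ⌊((k*n : ℕ):ℝ) * β⌋ with hB
  -- relation between B and F
  have hGirr : Irrational ((k:ℝ) * goldenRat * (n:ℝ)) := by
    have h1 : Irrational (((k*n : ℕ):ℝ) * goldenRat) := irr_golden.natCast_mul (by positivity)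
    have h2 : ((k*n : ℕ):ℝ) * goldenRat = (k:ℝ) * goldenRat * (n:ℝ) := by push_cast; ring
    rwa [h2] at h1
  have hGf := Int.floor_add_fract ((k:ℝ) * goldenRat * (n:ℝ))
  have hGp : 0 < Int.fract ((k:ℝ) * goldenRat * (n:ℝ)) := fract_pos_irr hGirr
  have hGl : Int.fract ((k:ℝ) * goldenRat * (n:ℝ)) < 1 := Int.fract_lt_one _
  have hBF : B = 2*(k:ℤ)*(n:ℤ) - 1 - F := by
    have hval : ((k*n : ℕ):ℝ) * β
        = ((2*(k:ℤ)*(n:ℤ) - 1 - F : ℤ):ℝ)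
          + (1 - Int.fract ((k:ℝ) * goldenRat * (n:ℝ))) := by
      push_cast
      unfold β
      linear_combination hGf
    rw [hB, hval, floor_split _ _ (by linarith) (by linarith)]
  have hdvd2 : (k:ℤ) ∣ B + F + 1 := ⟨2*n, by rw [hBF]; ring⟩
  have hiff : ((k:ℤ) ∣ B ∨ (k:ℤ) ∣ B + 1) ↔ ((k:ℤ) ∣ F ∨ (k:ℤ) ∣ F + 1) := by
    constructor
    · rintro (h | h)
      · right
        have := hdvd2.sub h
        rwa [show B + F + 1 - B = F + 1 by ring] at this
      · left
        have := hdvd2.sub h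
        rwa [show B + F + 1 - (B + 1) = F by ring] at this
    · rintro (h | h)
      · right
        have := hdvd2.sub h
        rwa [show B + F + 1 - F = B + 1 by ring] at this
      · left
        have := hdvd2.sub h
        rwa [show B + F + 1 - (F + 1) = B by ring] at this
  rw [← hiff]
  -- now the combinatorial side
  have hq := Int.floor_add_fract ((n:ℝ)*β)
  set θ := Int.fract ((n:ℝ)*β) with hθ
  set q : ℤ := ⌊(n:ℝ)*β⌋ with hqd
  have hθ0 : 0 < θ := fract_pos (by omega : n ≠ 0)
  have hθ1 : θ < 1 := Int.fract_lt_one _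
  have hθirr : Irrational θ := fract_irrational (by omega : n ≠ 0)
  have hBsplit : B = k*q + ⌊(k:ℝ)*θ⌋ := by
    have hval : ((k*n : ℕ):ℝ) * β = ((k*q : ℤ):ℝ) + (k:ℝ)*θ := by
      push_cast
      linear_combination (-(k:ℝ)) * hq
    rw [hB, hval, floor_int_add']
  have hkθ0 : (0:ℤ) ≤ ⌊(k:ℝ)*θ⌋ := Int.floor_nonneg.mpr (by positivity)
  have hkθk : ⌊(k:ℝ)*θ⌋ < (k:ℤ) := by
    rw [Int.floor_lt]
    push_cast
    have hkR : (1:ℝ) ≤ (k:ℝ) := by exact_mod_cast hk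
    nlinarith
  constructor
  · rintro ⟨i, hi⟩
    have hblock : ∀ t, t < k → blockSum w (i + t*n) n = blockSum w i n :=
      fun t ht => (parikh_eq_iff _ _ _).mp (hi t ht)
    set s : ℤ := (blockSum w i n : ℤ) with hs
    have htel : ∀ r, r ≤ k → c (i + r*n) - c i = r * s := by
      intro r
      induction r with
      | zero => intro _; simp
      | succ r ih =>
          intro hr
          have h1 := ih (by omega)
          have h2 : (blockSum w (i + r*n) n : ℤ) = c (i + r*n + n) - c (i + r*n) :=
            blockSum_cast _ _
          have h3 : (blockSum w (i + r*n) n : ℤ) = s := by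
            rw [hblock r (by omega)]
          have h4 : i + (r+1)*n = i + r*n + n := by ring
          rw [h4]
          push_cast
          rw [h3] at h2
          push_cast at h1
          linarith
    have htot := htel k le_rfl
    have hsplit := c_split i (k*n)
    have hy0 := Int.fract_nonneg (((i:ℝ)+1)*β)
    have hy1 := Int.fract_lt_one (((i:ℝ)+1)*β)
    have hflr : ⌊((k*n : ℕ):ℝ)*β + Int.fract (((i:ℝ)+1)*β)⌋ = k * s := by
      linarith [hsplit, htot]
    have hlow : B ≤ k * s := by
      rw [← hflr, hB]
      exact Int.floor_le_floor (by linarith)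
    have hhigh : k * s ≤ B + 1 := by
      rw [← hflr]
      calc ⌊((k*n : ℕ):ℝ)*β + Int.fract (((i:ℝ)+1)*β)⌋
          ≤ ⌊((k*n : ℕ):ℝ)*β + 1⌋ := Int.floor_le_floor (by linarith)
        _ = B + 1 := by rw [Int.floor_add_one, hB]
    have : B = k*s ∨ B + 1 = k*s := by omega
    rcases this with h | h
    · exact Or.inl ⟨s, h⟩
    · exact Or.inr ⟨s, h⟩
  · intro hP
    have hblockZ : ∀ (i t : ℕ), (blockSum w (i + t*n) n : ℤ)
        = c i + ⌊(((t+1)*n : ℕ):ℝ)*β + Int.fract (((i:ℝ)+1)*β)⌋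
          - (c i + ⌊((t*n : ℕ):ℝ)*β + Int.fract (((i:ℝ)+1)*β)⌋) := by
      intro i t
      rw [blockSum_cast, ← c_split i (t*n), ← c_split i ((t+1)*n)]
      rw [show i + (t+1)*n = i + t*n + n by ring]
    rcases hP with hA | hA
    · -- all blocks q
      have hdf : (k:ℤ) ∣ ⌊(k:ℝ)*θ⌋ := by
        have h1 : (k:ℤ) ∣ k*q := ⟨q, rfl⟩
        have := hA.sub h1
        rwa [hBsplit, add_sub_cancel_left] at this
      have hfl0 : ⌊(k:ℝ)*θ⌋ = 0 := by
        rcases eq_or_lt_of_le hkθ0 with h | h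
        · omega
        · have := Int.le_of_dvd h hdf
          omega
      have hkθlt1 : (k:ℝ)*θ < 1 := by
        have := Int.lt_floor_add_one ((k:ℝ)*θ)
        rw [hfl0] at this
        norm_num at this
        exact this
      obtain ⟨m, hm0, hy⟩ := exists_fract_lt (ε := 1 - (k:ℝ)*θ) (by linarith)
      refine ⟨m - 1, ?_⟩
      have hcast : (((m-1 : ℕ):ℝ)+1) = (m:ℝ) := by
        have : ((m-1:ℕ):ℝ) = (m:ℝ) - 1 := by
          push_cast [Nat.cast_sub (by omega : 1 ≤ m)]; ring
        rw [this]; ring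
      set y := Int.fract (((((m-1):ℕ):ℝ)+1)*β) with hyd
      have hyy : y = Int.fract ((m:ℝ)*β) := by rw [hyd, hcast]
      have hy0 : 0 ≤ y := Int.fract_nonneg _
      have hylt : y < 1 - (k:ℝ)*θ := by rw [hyy]; exact hy
      have hfloor : ∀ t : ℕ, t ≤ k → ⌊((t*n : ℕ):ℝ)*β + y⌋ = t*q := by
        intro t ht
        have hval : ((t*n : ℕ):ℝ)*β + y = ((t*q : ℤ):ℝ) + ((t:ℝ)*θ + y) := by
          push_cast
          linear_combination (-(t:ℝ)) * hq
        rw [hval]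
        apply floor_split
        · positivity
        · have htk : (t:ℝ) ≤ (k:ℝ) := by exact_mod_cast ht
          nlinarith
      intro t ht
      rw [parikh_eq_iff]
      have e : ∀ t' : ℕ, t' < k → (blockSum w ((m-1) + t'*n) n : ℤ) = q := by
        intro t' ht'
        rw [hblockZ (m-1) t', ← hyd, hfloor t' (by omega), hfloor (t'+1) (by omega)]
        push_cast
        ring
      have e1 := e t ht
      have e2 := e 0 (by omega)
      rw [show (m-1) + 0*n = m-1 by omega] at e2
      omega
    · -- all blocks q+1
      have hdf : (k:ℤ) ∣ ⌊(k:ℝ)*θ⌋ + 1 := by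
        have h1 : (k:ℤ) ∣ k*q := ⟨q, rfl⟩
        have := hA.sub h1
        have heq2 : B + 1 - k*q = ⌊(k:ℝ)*θ⌋ + 1 := by rw [hBsplit]; ring
        rwa [heq2] at this
      have hfl0 : ⌊(k:ℝ)*θ⌋ = (k:ℤ) - 1 := by
        have := Int.le_of_dvd (by omega) hdf
        omega
      have hge : ((k:ℤ):ℝ) - 1 ≤ (k:ℝ)*θ := by
        have := Int.floor_le ((k:ℝ)*θ)
        rw [hfl0] at this
        push_cast at this
        push_cast
        linarith
      have hne : (k:ℝ)*θ ≠ ((k:ℤ):ℝ) - 1 := by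
        have hirr : Irrational ((k:ℝ)*θ) := hθirr.natCast_mul (by omega : k ≠ 0)
        intro hcon
        exact hirr.ne_int ((k:ℤ) - 1) (by push_cast at hcon ⊢; linarith)
      have hgt : (k:ℝ) - 1 < (k:ℝ)*θ := by
        push_cast at hge hne
        rcases lt_or_eq_of_le hge with h | h
        · exact h
        · exact absurd h.symm hne
      obtain ⟨m, hm0, hy⟩ := exists_fract_gt (ε := 1 - (k:ℝ)*(1-θ)) (by nlinarith)
      refine ⟨m - 1, ?_⟩
      have hcast : (((m-1 : ℕ):ℝ)+1) = (m:ℝ) := by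
        have : ((m-1:ℕ):ℝ) = (m:ℝ) - 1 := by
          push_cast [Nat.cast_sub (by omega : 1 ≤ m)]; ring
        rw [this]; ring
      set y := Int.fract (((((m-1):ℕ):ℝ)+1)*β) with hyd
      have hyy : y = Int.fract ((m:ℝ)*β) := by rw [hyd, hcast]
      have hy1 : y < 1 := Int.fract_lt_one _
      have hygt : (k:ℝ)*(1-θ) < y := by
        rw [hyy]
        have : 1 - (1 - (k:ℝ)*(1-θ)) = (k:ℝ)*(1-θ) := by ring
        rw [this] at hy
        exact hy
      have hfloor : ∀ t : ℕ, t ≤ k → ⌊((t*n : ℕ):ℝ)*β + y⌋ = t*q + t := by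
        intro t ht
        have hval : ((t*n : ℕ):ℝ)*β + y
            = ((t*q + t : ℤ):ℝ) + ((t:ℝ)*θ + y - t) := by
          push_cast
          linear_combination (-(t:ℝ)) * hq
        rw [hval]
        have htk : (t:ℝ) ≤ (k:ℝ) := by exact_mod_cast ht
        apply floor_split
        · nlinarith
        · nlinarith
      intro t ht
      rw [parikh_eq_iff]
      have e : ∀ t' : ℕ, t' < k → (blockSum w ((m-1) + t'*n) n : ℤ) = q + 1 := by
        intro t' ht'
        rw [hblockZ (m-1) t', ← hyd, hfloor t' (by omega), hfloor (t'+1) (by omega)]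
        push_cast
        ring
      have e1 := e t ht
      have e2 := e 0 (by omega)
      rw [show (m-1) + 0*n = m-1 by omega] at e2
      omega


end FibH

/-- The Fibonacci word has an abelian k-power of order n if and only if
⌊kφn⌋ ≡ 0 or −1 (mod k). -/
theorem fibonacci_abelian_powers (x : ℕ → ℕ)
    (hx : IsFixedPointOf fibMorphism 0 x) (k n : ℕ) (hk : 1 ≤ k) (hn : 1 ≤ n) :
    (∃ i : ℕ, ∀ t : ℕ, t < k → parikh x (i + t * n) n = parikh x i n) ↔
    ((k : ℤ) ∣ ⌊(k : ℝ) * goldenRat * (n : ℝ)⌋ ∨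
     (k : ℤ) ∣ (⌊(k : ℝ) * goldenRat * (n : ℝ)⌋ + 1)) :=
  FibH.main x hx k n hk hn
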